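/- Let n ≥ 2, let λ₁,…,λₙ > 1, let φ ∈ (0, π/2], and define the chain x_j = (λ₁⋯λ_j)·e^{iφ} ∈ ℍ² for 0 ≤ j ≤ n (so x₀ = e^{iφ}). Then 0 ≤ τ(x₀,…,xₙ) ≤ 2·Σ_{j=2}^{n−1} 1/(λ_j − 1). -/

import Mathlib

open UpperHalfPlane Real Filter

/-- The tension of the chain `x 0, x 1, …, x n`:
`τ = Σ_{j=1}^{n−1} d(x_{j−1},x_{j+1}) − Σ_{j=2}^{n−1} d(x_{j−1},x_j) − d(x_0,x_n)`. -/
noncomputable def tension (n : ℕ) (x : ℕ → UpperHalfPlane) : ℝ :=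
  (∑ j ∈ Finset.range (n - 1), dist (x j) (x (j + 2)))
    - (∑ j ∈ Finset.range (n - 2), dist (x (j + 1)) (x (j + 2)))
    - dist (x 0) (x n)

/-- The Gromov product `⟨x,y⟩_z = (d(x,z)+d(z,y)−d(x,y))/2`. -/
noncomputable def gromov (x y z : UpperHalfPlane) : ℝ :=
  (dist x z + dist z y - dist x y) / 2

/-- A pair `(a,b)` is good if `a, b ≥ 0` and `sinh(a−b) > 2·sinh(a/2)`. -/
def GoodPair (a b : ℝ) : Prop :=
  0 ≤ a ∧ 0 ≤ b ∧ Real.sinh (a - b) > 2 * Real.sinh (a / 2)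

/-- The chain `x 0, …, x n` is `(a,b)`-good. -/
def GoodChain (a b : ℝ) (n : ℕ) (x : ℕ → UpperHalfPlane) : Prop :=
  (∀ j < n, dist (x (j + 1)) (x j) ≥ a) ∧
  (∀ j, 1 ≤ j → j + 1 ≤ n → gromov (x (j - 1)) (x (j + 1)) (x j) ≤ b)

noncomputable def Af (c t : ℝ) : ℝ := Real.arsinh (c * Real.sinh t)

noncomputable def Af' (c t : ℝ) : ℝ :=
  (Real.sqrt (1 + (c * Real.sinh t) ^ 2))⁻¹ * (c * Real.cosh t)

lemma hasDerivAt_Af (c t : ℝ) : HasDerivAt (Af c) (Af' c t) t :=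
  (Real.hasDerivAt_arsinh _).comp t ((Real.hasDerivAt_sinh t).const_mul c)

lemma Af'_antitoneOn {c : ℝ} (hc : 1 ≤ c) : AntitoneOn (Af' c) (Set.Ici 0) := by
  intro a ha b hb hab
  simp only [Set.mem_Ici] at ha hb
  have hc0 : (0:ℝ) < c := lt_of_lt_of_le one_pos hc
  have hca : 0 < Real.cosh a := Real.cosh_pos a
  have hcb : 0 < Real.cosh b := Real.cosh_pos b
  have hRa : (0:ℝ) < Real.sqrt (1 + (c * Real.sinh a) ^ 2) :=
    Real.sqrt_pos.2 (by positivity)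
  have hRb : (0:ℝ) < Real.sqrt (1 + (c * Real.sinh b) ^ 2) :=
    Real.sqrt_pos.2 (by positivity)
  have hsa : (Real.sqrt (1 + (c * Real.sinh a) ^ 2)) ^ 2 = 1 + (c * Real.sinh a) ^ 2 :=
    Real.sq_sqrt (by positivity)
  have hsb : (Real.sqrt (1 + (c * Real.sinh b) ^ 2)) ^ 2 = 1 + (c * Real.sinh b) ^ 2 :=
    Real.sq_sqrt (by positivity)
  have hcosh : Real.cosh a ≤ Real.cosh b := by
    rw [Real.cosh_le_cosh, abs_of_nonneg ha, abs_of_nonneg hb]; exact hab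
  unfold Af'
  rw [inv_mul_eq_div, inv_mul_eq_div, div_le_div_iff₀ hRb hRa]
  have h1 : 0 ≤ c * Real.cosh b * Real.sqrt (1 + (c * Real.sinh a) ^ 2) := by positivity
  have h2 : 0 ≤ c * Real.cosh a * Real.sqrt (1 + (c * Real.sinh b) ^ 2) := by positivity
  rw [← pow_le_pow_iff_left₀ h1 h2 two_ne_zero]
  have e1 := Real.cosh_sq a
  have e2 := Real.cosh_sq b
  have h3 : Real.cosh a ^ 2 ≤ Real.cosh b ^ 2 := by nlinarith
  have h4 : (1:ℝ) ≤ c ^ 2 := by nlinarith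
  have lhs_eq : (c * Real.cosh b * Real.sqrt (1 + (c * Real.sinh a) ^ 2)) ^ 2
      = c ^ 2 * Real.cosh b ^ 2 * (1 + c ^ 2 * Real.sinh a ^ 2) := by
    rw [mul_pow, hsa]; ring
  have rhs_eq : (c * Real.cosh a * Real.sqrt (1 + (c * Real.sinh b) ^ 2)) ^ 2
      = c ^ 2 * Real.cosh a ^ 2 * (1 + c ^ 2 * Real.sinh b ^ 2) := by
    rw [mul_pow, hsb]; ring
  rw [lhs_eq, rhs_eq]
  have key : c ^ 2 * Real.cosh b ^ 2 * (1 + c ^ 2 * Real.sinh a ^ 2)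
      ≤ c ^ 2 * Real.cosh a ^ 2 * (1 + c ^ 2 * Real.sinh b ^ 2) := by
    have expand : c ^ 2 * Real.cosh a ^ 2 * (1 + c ^ 2 * Real.sinh b ^ 2)
        - c ^ 2 * Real.cosh b ^ 2 * (1 + c ^ 2 * Real.sinh a ^ 2)
        = c ^ 2 * ((c ^ 2 - 1) * (Real.cosh b ^ 2 - Real.cosh a ^ 2)) := by
      rw [show Real.sinh b ^ 2 = Real.cosh b ^ 2 - 1 by linarith,
        show Real.sinh a ^ 2 = Real.cosh a ^ 2 - 1 by linarith]
      ring
    nlinarith [mul_nonneg (sq_nonneg c)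
      (mul_nonneg (by linarith : (0:ℝ) ≤ c ^ 2 - 1)
        (by linarith : (0:ℝ) ≤ Real.cosh b ^ 2 - Real.cosh a ^ 2))]
  exact key

lemma Af_submodular {c : ℝ} (hc : 1 ≤ c) {p q r : ℝ} (hp : 0 ≤ p) (hq : 0 ≤ q) (hr : 0 ≤ r) :
    Af c q + Af c (p + q + r) ≤ Af c (p + q) + Af c (q + r) := by
  have hdiff : ∀ t : ℝ, HasDerivAt (fun x => Af c (x + r) - Af c x)
      (Af' c (t + r) - Af' c t) t := by
    intro t
    exact (((hasDerivAt_Af c (t + r)).comp t ((hasDerivAt_id t).add_const r)).congr_deriv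
      (mul_one _)).sub (hasDerivAt_Af c t)
  have hanti : AntitoneOn (fun x => Af c (x + r) - Af c x) (Set.Ici 0) := by
    apply antitoneOn_of_deriv_nonpos (convex_Ici 0)
    · have : Continuous (Af c) :=
        Real.continuous_arsinh.comp (continuous_const.mul Real.continuous_sinh)
      exact ((this.comp (continuous_id.add continuous_const)).sub this).continuousOn
    · intro t ht
      exact ((hdiff t).differentiableAt).differentiableWithinAt
    · intro t ht
      rw [(hdiff t).deriv]
      have ht0 : (0:ℝ) ≤ t := le_of_lt (by simpa using ht)
      have := Af'_antitoneOn hc (Set.mem_Ici.2 ht0)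
        (Set.mem_Ici.2 (by linarith : (0:ℝ) ≤ t + r)) (by linarith)
      linarith
  have := hanti (Set.mem_Ici.2 hq) (Set.mem_Ici.2 (by linarith : (0:ℝ) ≤ p + q))
    (by linarith)
  simp only at this
  have e : p + q + r = (p + q) + r := by ring
  rw [e]
  linarith

lemma Af_le_add {c : ℝ} (hc : 1 ≤ c) {x r : ℝ} (hx : 0 ≤ x) (hr : 0 ≤ r) :
    Af c x + r ≤ Af c (x + r) := by
  have hc0 : (0:ℝ) < c := lt_of_lt_of_le one_pos hc
  have h1 : Af c x + r = Real.arsinh (Real.sinh (Af c x + r)) := (Real.arsinh_sinh _).symm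
  rw [h1]
  simp only [Af]
  rw [Real.arsinh_le_arsinh, Real.sinh_add, Real.sinh_add, Real.sinh_arsinh, Real.cosh_arsinh]
  have hsx : 0 ≤ Real.sinh x := Real.sinh_nonneg_iff.2 hx
  have hsr : 0 ≤ Real.sinh r := Real.sinh_nonneg_iff.2 hr
  have hQ : Real.sqrt (1 + (c * Real.sinh x) ^ 2) ≤ c * Real.cosh x := by
    have h2 : 1 + (c * Real.sinh x) ^ 2 ≤ (c * Real.cosh x) ^ 2 := by
      have e1 := Real.cosh_sq x
      have h4 : (1:ℝ) ≤ c ^ 2 := by nlinarith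
      nlinarith [mul_le_mul_of_nonneg_right h4 (sq_nonneg (Real.sinh x))]
    have := Real.sqrt_le_sqrt h2
    rwa [Real.sqrt_sq (by positivity)] at this
  have := mul_le_mul_of_nonneg_right hQ hsr
  nlinarith [this]

lemma Af_add_le {c : ℝ} (hc : 1 ≤ c) {y r : ℝ} (hy : 0 < y) (hr : 0 ≤ r) :
    Af c (y + r) ≤ Af c y + r + 1 / (Real.exp (2 * y) - 1) := by
  have hc0 : (0:ℝ) < c := lt_of_lt_of_le one_pos hc
  have hs : 0 < Real.sinh y := Real.sinh_pos_iff.2 hy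
  have hS : Real.sinh y ≤ Real.sinh (y + r) := Real.sinh_le_sinh.2 (by linarith)
  have hSpos : 0 < Real.sinh (y + r) := lt_of_lt_of_le hs hS
  set s := Real.sinh y with hs_def
  set S := Real.sinh (y + r) with hS_def
  set t := Real.log S - Real.log s with ht_def
  have ht0 : 0 ≤ t := by
    have := Real.log_le_log hs hS
    simp only [ht_def]; linarith
  have partA : Af c (y + r) ≤ Af c y + t := by
    have h1 : Af c y + t = Real.arsinh (Real.sinh (Af c y + t)) := (Real.arsinh_sinh _).symm
    rw [h1]
    simp only [Af]
    rw [Real.arsinh_le_arsinh, ← hS_def, ← hs_def, Real.sinh_add, Real.sinh_arsinh,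
      Real.cosh_arsinh]
    have het : Real.exp t = S / s := by
      rw [ht_def, Real.exp_sub, Real.exp_log hSpos, Real.exp_log hs]
    have hent : Real.exp (-t) = s / S := by
      rw [Real.exp_neg, het, inv_div]
    have hcosht : Real.cosh t = (S / s + s / S) / 2 := by
      rw [Real.cosh_eq, het, hent]
    have hsinht : Real.sinh t = (S / s - s / S) / 2 := by
      rw [Real.sinh_eq, het, hent]
    rw [hcosht, hsinht]
    have hQ : c * s ≤ Real.sqrt (1 + (c * s) ^ 2) :=
      Real.le_sqrt_of_sq_le (by nlinarith)
    have hsqQ : Real.sqrt (1 + (c * s) ^ 2) ^ 2 = 1 + (c * s) ^ 2 :=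
      Real.sq_sqrt (by positivity)
    set Q := Real.sqrt (1 + (c * s) ^ 2) with hQ_def
    have key : c * s * ((S / s + s / S) / 2) + Q * ((S / s - s / S) / 2) - c * S
        = (S ^ 2 - s ^ 2) * (Q - c * s) / (2 * s * S) := by
      field_simp
      ring
    have h2 : 0 ≤ (S ^ 2 - s ^ 2) * (Q - c * s) / (2 * s * S) := by
      apply div_nonneg
      · apply mul_nonneg
        · nlinarith
        · linarith
      · positivity
    linarith
  have partB : t ≤ r + 1 / (Real.exp (2 * y) - 1) := by
    have hey : 1 < Real.exp (2 * y) := by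
      rw [Real.one_lt_exp_iff]; linarith
    have hx1 : Real.exp (-(2 * y)) < 1 := by
      rw [Real.exp_neg]
      rw [inv_lt_one_iff₀]; right; exact hey
    have hx0 : 0 < Real.exp (-(2 * y)) := Real.exp_pos _
    have h1 : S * (1 - Real.exp (-(2 * y))) ≤ Real.exp r * s := by
      rw [hS_def, hs_def, Real.sinh_eq, Real.sinh_eq]
      have e1 : Real.exp (y + r) = Real.exp y * Real.exp r := Real.exp_add y r
      have e2 : Real.exp (-(y + r)) = (Real.exp y * Real.exp r)⁻¹ := by
        rw [Real.exp_neg, e1]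
      have e3 : Real.exp (-(2 * y)) = (Real.exp y ^ 2)⁻¹ := by
        rw [Real.exp_neg, ← Real.exp_nat_mul]
        norm_num [mul_comm]
      have e4 : Real.exp (-y) = (Real.exp y)⁻¹ := Real.exp_neg y
      rw [e1, e2, e3, e4]
      have hA : 1 < Real.exp y := Real.one_lt_exp_iff.2 hy
      have hB : 1 ≤ Real.exp r := Real.one_le_exp hr
      set A := Real.exp y
      set B := Real.exp r
      have hA0 : 0 < A := by positivity
      have hB0 : 0 < B := by positivity
      rw [div_mul_eq_mul_div, div_le_iff₀ (by norm_num : (0:ℝ) < 2)]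
      field_simp
      nlinarith [sq_nonneg A, sq_nonneg (A*B), mul_pos hA0 hB0, sq_nonneg (A - 1),
        sq_nonneg (A + 1)]
    have h2 : S / s ≤ Real.exp r / (1 - Real.exp (-(2 * y))) := by
      rw [div_le_div_iff₀ hs (by linarith)]
      linarith [h1]
    have h3 : t ≤ Real.log (Real.exp r / (1 - Real.exp (-(2 * y)))) := by
      rw [ht_def, ← Real.log_div hSpos.ne' hs.ne']
      exact Real.log_le_log (by positivity) h2
    rw [Real.log_div (Real.exp_pos r).ne' (by linarith), Real.log_exp] at h3
    have h4 : -Real.log (1 - Real.exp (-(2 * y))) ≤ 1 / (Real.exp (2 * y) - 1) := by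
      have h5 : Real.log (1 - Real.exp (-(2 * y)))⁻¹ ≤ (1 - Real.exp (-(2 * y)))⁻¹ - 1 :=
        Real.log_le_sub_one_of_pos (inv_pos.2 (by linarith))
      rw [Real.log_inv] at h5
      have h6 : (1 - Real.exp (-(2 * y)))⁻¹ - 1 = 1 / (Real.exp (2 * y) - 1) := by
        rw [Real.exp_neg]
        have h7 : Real.exp (2 * y) ≠ 0 := (Real.exp_pos _).ne'
        have h8 : Real.exp (2 * y) - 1 ≠ 0 := sub_ne_zero.2 (ne_of_gt hey)
        have h9 : 1 - (Real.exp (2 * y))⁻¹ ≠ 0 := by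
          have : (0:ℝ) < 1 - (Real.exp (2 * y))⁻¹ := by
            rw [← Real.exp_neg]; linarith
          linarith
        field_simp
        ring
      linarith
    linarith
  linarith

lemma dist_formula {φ : ℝ} (hφ1 : 0 < φ) (hφ2 : φ ≤ π / 2) {P Q : ℝ} (hP : 0 < P)
    (hPQ : P ≤ Q) {z w : ℍ} (hz : (z : ℂ) = (P : ℂ) * Complex.exp (φ * Complex.I))
    (hw : (w : ℂ) = (Q : ℂ) * Complex.exp (φ * Complex.I)) :
    dist z w = 2 * Af (1 / Real.sin φ) ((Real.log Q - Real.log P) / 2) := by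
  have hQ : 0 < Q := lt_of_lt_of_le hP hPQ
  have hπ : (0:ℝ) < π := Real.pi_pos
  have hsin : 0 < Real.sin φ := Real.sin_pos_of_pos_of_lt_pi hφ1 (by linarith)
  have hzim : z.im = P * Real.sin φ := by
    rw [← UpperHalfPlane.coe_im, hz]
    simp [Complex.mul_im, Complex.exp_ofReal_mul_I_im, Complex.exp_ofReal_mul_I_re]
  have hwim : w.im = Q * Real.sin φ := by
    rw [← UpperHalfPlane.coe_im, hw]
    simp [Complex.mul_im, Complex.exp_ofReal_mul_I_im, Complex.exp_ofReal_mul_I_re]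
  have hdistc : dist (z : ℂ) (w : ℂ) = Q - P := by
    rw [Complex.dist_eq, hz, hw, ← sub_mul, norm_mul, Complex.norm_exp_ofReal_mul_I, mul_one]
    rw [show ((P:ℂ) - Q) = ((P - Q : ℝ) : ℂ) by push_cast; ring, Complex.norm_real, Real.norm_eq_abs,
      abs_of_nonpos (by linarith)]
    ring
  rw [UpperHalfPlane.dist_eq, hdistc, hzim, hwim]
  congr 1
  rw [Af]
  congr 1
  have hsqrtim : Real.sqrt (P * Real.sin φ * (Q * Real.sin φ))
      = Real.sin φ * Real.sqrt (P * Q) := by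
    rw [show P * Real.sin φ * (Q * Real.sin φ) = Real.sin φ ^ 2 * (P * Q) by ring,
      Real.sqrt_mul (sq_nonneg _), Real.sqrt_sq hsin.le]
  have hexp : Real.exp ((Real.log Q - Real.log P) / 2) = Real.sqrt Q / Real.sqrt P := by
    rw [show (Real.log Q - Real.log P) / 2 = Real.log (Q / P) * (1/2) by
      rw [Real.log_div hQ.ne' hP.ne']; ring]
    rw [← Real.rpow_def_of_pos (div_pos hQ hP), ← Real.sqrt_eq_rpow, Real.sqrt_div hQ.le]
  have hexpneg : Real.exp (-((Real.log Q - Real.log P) / 2)) = Real.sqrt P / Real.sqrt Q := by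
    rw [Real.exp_neg, hexp, inv_div]
  have hsinh : Real.sinh ((Real.log Q - Real.log P) / 2) = (Q - P) / (2 * Real.sqrt (P * Q)) := by
    rw [Real.sinh_eq, hexp, hexpneg, Real.sqrt_mul hP.le]
    have haP : 0 < Real.sqrt P := Real.sqrt_pos.2 hP
    have haQ : 0 < Real.sqrt Q := Real.sqrt_pos.2 hQ
    have haP2 : Real.sqrt P ^ 2 = P := Real.sq_sqrt hP.le
    have haQ2 : Real.sqrt Q ^ 2 = Q := Real.sq_sqrt hQ.le
    rw [← haP2, ← haQ2]
    field_simp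
    rw [Real.sqrt_sq haQ.le, Real.sqrt_sq haP.le]
  rw [hsinh, hsqrtim]
  have hPQ0 : 0 < Real.sqrt (P * Q) := Real.sqrt_pos.2 (by positivity)
  field_simp

lemma tension_key {c : ℝ} (hc : 1 ≤ c) (b : ℕ → ℝ) (n : ℕ)
    (hb : ∀ j, j < n → b j < b (j + 1)) (k : ℕ) (hk : k + 2 ≤ n) :
    0 ≤ (∑ j ∈ Finset.range (k + 1), 2 * Af c (b (j + 2) - b j))
        - (∑ j ∈ Finset.range k, 2 * Af c (b (j + 2) - b (j + 1)))
        - 2 * Af c (b (k + 2) - b 0) ∧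
    (∑ j ∈ Finset.range (k + 1), 2 * Af c (b (j + 2) - b j))
        - (∑ j ∈ Finset.range k, 2 * Af c (b (j + 2) - b (j + 1)))
        - 2 * Af c (b (k + 2) - b 0)
      ≤ ∑ j ∈ Finset.Icc 2 (k + 1), 2 * (1 / (Real.exp (2 * (b j - b (j - 1))) - 1)) := by
  have bmono : ∀ {i j : ℕ}, i ≤ j → j ≤ n → b i ≤ b j := by
    intro i j hij hjn
    induction j with
    | zero => obtain rfl := Nat.le_zero.1 hij; exact le_rfl
    | succ m ih =>
      rcases Nat.lt_or_ge i (m + 1) with h | h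
      · have h1 : b i ≤ b m := ih (Nat.lt_succ_iff.1 h) (by omega)
        have h2 := hb m (by omega)
        linarith
      · have : i = m + 1 := le_antisymm hij h
        simp [this]
  induction k with
  | zero =>
    simp only [Finset.sum_range_one, Finset.sum_range_zero]
    rw [Finset.Icc_eq_empty (by omega)]
    simp
  | succ k ih =>
    obtain ⟨ih1, ih2⟩ := ih (by omega)
    set p := b (k + 1) - b 0 with hp_def
    set q := b (k + 2) - b (k + 1) with hq_def
    set r := b (k + 3) - b (k + 2) with hr_def
    have hp : 0 ≤ p := sub_nonneg.2 (bmono (Nat.zero_le _) (by omega))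
    have hq : 0 < q := sub_pos.2 (hb (k + 1) (by omega))
    have hr : 0 ≤ r := le_of_lt (sub_pos.2 (hb (k + 2) (by omega)))
    rw [Finset.sum_range_succ (fun j => 2 * Af c (b (j + 2) - b j)) (k + 1),
      Finset.sum_range_succ (fun j => 2 * Af c (b (j + 2) - b (j + 1))) k,
      Finset.sum_Icc_succ_top (by omega : 2 ≤ k + 1 + 1)]
    have eq1 : b (k + 1 + 2) - b (k + 1) = q + r := by
      rw [hq_def, hr_def]; show b (k + 3) - b (k + 1) = _; ring
    have eq3 : b (k + 1 + 2) - b 0 = p + q + r := by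
      rw [hp_def, hq_def, hr_def]; show b (k + 3) - b 0 = _; ring
    have eq5 : b (k + 1 + 1) - b (k + 1 + 1 - 1) = q := hq_def.symm
    have eq2 : b (k + 2) - b (k + 1) = q := hq_def.symm
    have eq4 : b (k + 2) - b 0 = p + q := by
      rw [hp_def, hq_def]; ring
    rw [eq1, eq3, eq5, eq2]
    rw [eq4] at ih1 ih2
    have hsub := Af_submodular hc hp hq.le hr
    have hub := Af_add_le hc hq hr
    have hlb := Af_le_add hc (add_nonneg hp hq.le) hr
    constructor
    · linarith
    · linarith

/-- For the chain `x_j = (λ₁⋯λ_j)·e^{iφ}` with `λ_j > 1` and `0 < φ ≤ π/2`: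
`0 ≤ τ(x₀,…,xₙ) ≤ 2·Σ_{j=2}^{n−1} 1/(λ_j − 1)`. -/
theorem tension_nonneg_and_le (n : ℕ) (hn : 2 ≤ n) (lam : ℕ → ℝ)
    (hlam : ∀ j, 1 ≤ j → j ≤ n → 1 < lam j)
    (φ : ℝ) (hφ1 : 0 < φ) (hφ2 : φ ≤ π / 2)
    (x : ℕ → UpperHalfPlane)
    (hx : ∀ j ≤ n,
      ((x j : ℂ)) = ((∏ i ∈ Finset.Icc 1 j, lam i : ℝ) : ℂ) * Complex.exp (φ * Complex.I)) :
    0 ≤ tension n x ∧ tension n x ≤ 2 * ∑ j ∈ Finset.Icc 2 (n - 1), 1 / (lam j - 1) := by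
  have hπ : (0:ℝ) < π := Real.pi_pos
  have hsin : 0 < Real.sin φ := Real.sin_pos_of_pos_of_lt_pi hφ1 (by linarith)
  set c := 1 / Real.sin φ with hc_def
  have hc : 1 ≤ c := by
    rw [hc_def, le_div_iff₀ hsin, one_mul]
    exact Real.sin_le_one φ
  set P : ℕ → ℝ := fun j => ∏ i ∈ Finset.Icc 1 j, lam i with hP_def
  have hPpos : ∀ j, j ≤ n → 0 < P j := by
    intro j hj
    apply Finset.prod_pos
    intro i hi
    rw [Finset.mem_Icc] at hi
    have := hlam i hi.1 (le_trans hi.2 hj)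
    linarith
  have hPsucc : ∀ j, P (j + 1) = P j * lam (j + 1) := by
    intro j
    exact Finset.prod_Icc_succ_top (by omega) lam
  set b : ℕ → ℝ := fun j => Real.log (P j) / 2 with hb_def
  have hb : ∀ j, j < n → b j < b (j + 1) := by
    intro j hj
    have h1 : 0 < P j := hPpos j (by omega)
    have h2 : P j < P (j + 1) := by
      rw [hPsucc]
      have := hlam (j + 1) (by omega) (by omega)
      nlinarith
    exact div_lt_div_of_pos_right (Real.log_lt_log h1 h2) (by norm_num)
  have hPmono : ∀ i j, i ≤ j → j ≤ n → P i ≤ P j := by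
    intro i j hij hjn
    induction j with
    | zero => obtain rfl := Nat.le_zero.1 hij; exact le_rfl
    | succ m ih =>
      rcases Nat.lt_or_ge i (m + 1) with h | h
      · have h1 : P i ≤ P m := ih (Nat.lt_succ_iff.1 h) (by omega)
        have h2 : P m ≤ P (m + 1) := by
          rw [hPsucc]
          have h3 := hPpos m (by omega)
          have h4 := hlam (m + 1) (by omega) (by omega)
          nlinarith
        linarith
      · have : i = m + 1 := le_antisymm hij h
        simp [this]
  have hdist : ∀ i j, i ≤ j → j ≤ n → dist (x i) (x j) = 2 * Af c (b j - b i) := by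
    intro i j hij hjn
    have h1 := dist_formula hφ1 hφ2 (hPpos i (le_trans hij hjn))
      (hPmono i j hij hjn) (hx i (le_trans hij hjn)) (hx j hjn)
    rw [h1, hc_def, hb_def]
    congr 1
    show Af _ _ = Af _ ((Real.log (P j)) / 2 - (Real.log (P i)) / 2)
    congr 1
    ring
  obtain ⟨k, rfl⟩ : ∃ k, n = k + 2 := ⟨n - 2, by omega⟩
  have htension : tension (k + 2) x =
      (∑ j ∈ Finset.range (k + 1), 2 * Af c (b (j + 2) - b j))
        - (∑ j ∈ Finset.range k, 2 * Af c (b (j + 2) - b (j + 1)))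
        - 2 * Af c (b (k + 2) - b 0) := by
    rw [tension, show k + 2 - 1 = k + 1 from rfl, show k + 2 - 2 = k from rfl]
    congr 1
    congr 1
    · apply Finset.sum_congr rfl
      intro j hj
      rw [Finset.mem_range] at hj
      exact hdist j (j + 2) (by omega) (by omega)
    · apply Finset.sum_congr rfl
      intro j hj
      rw [Finset.mem_range] at hj
      exact hdist (j + 1) (j + 2) (by omega) (by omega)
    · exact hdist 0 (k + 2) (by omega) (le_rfl)
  have hbudget : ∑ j ∈ Finset.Icc 2 (k + 1), 2 * (1 / (Real.exp (2 * (b j - b (j - 1))) - 1))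
      = 2 * ∑ j ∈ Finset.Icc 2 (k + 2 - 1), 1 / (lam j - 1) := by
    rw [show k + 2 - 1 = k + 1 from rfl, Finset.mul_sum]
    apply Finset.sum_congr rfl
    intro j hj
    rw [Finset.mem_Icc] at hj
    obtain ⟨m, rfl⟩ : ∃ m, j = m + 1 := ⟨j - 1, by omega⟩
    have he : Real.exp (2 * (b (m + 1) - b (m + 1 - 1))) = lam (m + 1) := by
      show Real.exp (2 * (Real.log (P (m + 1)) / 2 - Real.log (P (m + 1 - 1)) / 2)) = lam (m + 1)
      rw [show m + 1 - 1 = m from rfl,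
        show 2 * (Real.log (P (m + 1)) / 2 - Real.log (P m) / 2)
          = Real.log (P (m + 1)) - Real.log (P m) by ring,
        Real.exp_sub, Real.exp_log (hPpos (m + 1) (by omega)),
        Real.exp_log (hPpos m (by omega)), hPsucc]
      exact mul_div_cancel_left₀ _ (hPpos m (by omega)).ne'
    rw [he]
  obtain ⟨h1, h2⟩ := tension_key hc b (k + 2) hb k le_rfl
  rw [htension]
  constructor
  · exact h1
  · rw [← hbudget]
    exact h2
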